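/- Let m be a natural number, s_0,…,s_m ∈ ℂ support points, w_0,…,w_m ∈ ℂ barycentric weights, and ν a natural number with ν ≤ m. Let q = ∑_{k=0}^m w_k · ∏_{j≠k} (X − s_j) ∈ ℂ[X]. If q is nonzero and has degree exactly m − ν, then ∑_{k=0}^m w_k s_k^l = 0 for every natural number l < ν, and ∑_{k=0}^m w_k s_k^ν ≠ 0. -/

import Mathlib

open Polynomial

/-- Denominator half of the converse direction of the paper's Theorem 3.2. -/
theorem denominator_degree_converse (m : ℕ) (s w : ℕ → ℂ) (ν : ℕ) (hν : ν ≤ m)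
    (q : Polynomial ℂ)
    (hq : q = ∑ k ∈ Finset.range (m + 1),
      C (w k) * ∏ j ∈ (Finset.range (m + 1)).erase k, (X - C (s j)))
    (hq0 : q ≠ 0) (hdeg : q.natDegree = m - ν) :
    (∀ l < ν, ∑ k ∈ Finset.range (m + 1), w k * s k ^ l = 0) ∧
      ∑ k ∈ Finset.range (m + 1), w k * s k ^ ν ≠ 0 := by
  set S := Finset.range (m + 1) with hS
  set L : ℕ → Polynomial ℂ := fun k => ∏ j ∈ S.erase k, (X - C (s j)) with hL
  set P : Polynomial ℂ := ∏ j ∈ S, (X - C (s j)) with hP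
  set μ : ℕ → ℂ := fun t => ∑ k ∈ S, w k * s k ^ t with hμdef
  set Q : ℕ → Polynomial ℂ := fun t => ∑ k ∈ S, C (w k * s k ^ t) * L k with hQdef
  have hLmonic : ∀ k, (L k).Monic := fun k =>
    monic_prod_of_monic _ _ (fun j _ => monic_X_sub_C _)
  have hLdeg : ∀ k ∈ S, (L k).natDegree = m := by
    intro k hk
    rw [hL, natDegree_prod_of_monic _ _ (fun j _ => monic_X_sub_C _)]
    simp [Finset.card_erase_of_mem (show k ∈ Finset.range (m + 1) from hk), hS]
  have hLcoeffm : ∀ k ∈ S, (L k).coeff m = 1 := by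
    intro k hk
    have := (hLmonic k).coeff_natDegree
    rwa [hLdeg k hk] at this
  have hLcoeffm1 : ∀ k ∈ S, (L k).coeff (m + 1) = 0 := fun k hk =>
    coeff_eq_zero_of_natDegree_lt (by rw [hLdeg k hk]; omega)
  have hPmonic : P.Monic := monic_prod_of_monic _ _ (fun j _ => monic_X_sub_C _)
  have hPdeg : P.natDegree = m + 1 := by
    rw [hP, natDegree_prod_of_monic _ _ (fun j _ => monic_X_sub_C _)]
    simp [hS]
  have hPm1 : P.coeff (m + 1) = 1 := by
    rw [← hPdeg]; exact hPmonic.coeff_natDegree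
  have hstep : ∀ t, X * Q t = C (μ t) * P + Q (t + 1) := by
    intro t
    have hterm : ∀ k ∈ S, X * (C (w k * s k ^ t) * L k)
        = C (w k * s k ^ t) * P + C (w k * s k ^ (t + 1)) * L k := by
      intro k hk
      have h1 : (X - C (s k)) * L k = P := by
        exact Finset.mul_prod_erase S (fun j => X - C (s j)) hk
      rw [← h1, pow_succ]
      simp only [C_mul]
      ring
    calc X * Q t = ∑ k ∈ S, X * (C (w k * s k ^ t) * L k) := by
          simp only [hQdef]; rw [Finset.mul_sum]
      _ = ∑ k ∈ S, (C (w k * s k ^ t) * P + C (w k * s k ^ (t + 1)) * L k) :=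
          Finset.sum_congr rfl hterm
      _ = C (μ t) * P + Q (t + 1) := by
          rw [Finset.sum_add_distrib, ← Finset.sum_mul, hμdef, hQdef]
          simp [map_sum]
  have hQm1 : ∀ t, (Q t).coeff (m + 1) = 0 := by
    intro t
    rw [hQdef]
    simp only [finset_sum_coeff, coeff_C_mul]
    exact Finset.sum_eq_zero fun k hk => by rw [hLcoeffm1 k hk, mul_zero]
  have hQm : ∀ t, (Q t).coeff m = μ t := by
    intro t
    rw [hQdef, hμdef]
    simp only [finset_sum_coeff, coeff_C_mul]
    exact Finset.sum_congr rfl fun k hk => by rw [hLcoeffm k hk, mul_one]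
  have hQ0 : Q 0 = q := by
    rw [hQdef, hq]
    simp
    rfl
  have key : ∀ l, l ≤ ν → (∀ r < l, μ r = 0) ∧ Q l = X ^ l * q := by
    intro l
    induction l with
    | zero =>
      intro _
      exact ⟨fun r hr => absurd hr (Nat.not_lt_zero r), by simpa using hQ0⟩
    | succ l ih =>
      intro hl
      obtain ⟨hμ0, hQl⟩ := ih (Nat.le_of_succ_le hl)
      have hlν : l < ν := hl
      have heq : X ^ (l + 1) * q = C (μ l) * P + Q (l + 1) := by
        rw [← hstep l, hQl, pow_succ]; ring
      have hcoeffL : (X ^ (l + 1) * q).coeff (m + 1) = 0 := by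
        have hm : m + 1 = (m - l) + (l + 1) := by omega
        rw [hm, coeff_X_pow_mul]
        exact coeff_eq_zero_of_natDegree_lt (by omega)
      have hμl : μ l = 0 := by
        have := congrArg (fun p => p.coeff (m + 1)) heq
        simp only [hcoeffL, coeff_add, coeff_C_mul, hPm1, mul_one, hQm1, add_zero] at this
        exact this.symm
      have hQl1 : Q (l + 1) = X ^ (l + 1) * q := by
        rw [heq, hμl]; simp
      refine ⟨fun r hr => ?_, hQl1⟩
      rcases Nat.lt_succ_iff_lt_or_eq.mp hr with h | h
      · exact hμ0 r h
      · rw [h]; exact hμl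
  obtain ⟨hμ0, hQν⟩ := key ν le_rfl
  constructor
  · exact fun l hl => hμ0 l hl
  · have h1 : μ ν = q.coeff (m - ν) := by
      rw [← hQm ν, hQν]
      conv_lhs => rw [show m = (m - ν) + ν by omega]
      rw [coeff_X_pow_mul]
    have h2 : q.coeff (m - ν) ≠ 0 := by
      rw [← hdeg]
      exact fun h => hq0 (leadingCoeff_eq_zero.mp h)
    exact fun h => h2 (by rw [← h1]; exact h)
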